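/- Let K : [0,∞) → (0,∞) be continuously differentiable with ∫₀^∞ 1/K(u) du = ∞ and ∫₀^∞ 1/K(u)² du < ∞, and let ε : [0,∞) → [0,∞) be differentiable, satisfying for some α, σ², C > 0 and all t ≥ T: ε'(t) ≤ −(2α/K(t)) ε(t) + σ²(C+1)/K(t)². Then ε(t) → 0 as t → ∞. -/

import Mathlib

open MeasureTheory Filter

/-- Abstract decay lemma for the variable learning rate: if `K` is `C¹`, positive,
with `∫₀^∞ 1/K = ∞` and `∫₀^∞ 1/K² < ∞`, and the nonnegative differentiable `ε`
satisfies `ε' ≤ -(2α/K)ε + σ²(C+1)/K²` for `t ≥ T`, then `ε(t) → 0` as `t → ∞`. -/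
theorem stmt_18 (K : ℝ → ℝ) (hK1 : ContDiff ℝ 1 K) (hKpos : ∀ t, 0 < K t)
    (hKdiv : ¬ IntegrableOn (fun u => 1 / K u) (Set.Ici (0 : ℝ)))
    (hKsq : IntegrableOn (fun u => 1 / (K u) ^ 2) (Set.Ici (0 : ℝ)))
    (ε : ℝ → ℝ) (hε : Differentiable ℝ ε) (hεpos : ∀ t, 0 ≤ ε t)
    (α σ2 C T : ℝ) (hα : 0 < α) (hσ : 0 < σ2) (hC : 0 < C)
    (h : ∀ t, T ≤ t → deriv ε t ≤ -(2 * α / K t) * ε t + σ2 * (C + 1) / (K t) ^ 2) :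
    Tendsto ε atTop (nhds 0) := by
  have hKc : Continuous K := hK1.continuous
  have hKne : ∀ t, K t ≠ 0 := fun t => (hKpos t).ne'
  set f : ℝ → ℝ := fun u => (K u)⁻¹ with hf_def
  have hfc : Continuous f := hKc.inv₀ hKne
  have hfpos : ∀ t, 0 < f t := fun t => inv_pos.2 (hKpos t)
  set f2 : ℝ → ℝ := fun u => ((K u) ^ 2)⁻¹ with hf2_def
  have hf2c : Continuous f2 := (hKc.pow 2).inv₀ fun t => pow_ne_zero 2 (hKne t)
  have hf2pos : ∀ t, 0 < f2 t := fun t => inv_pos.2 (pow_pos (hKpos t) 2)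
  set I : ℝ → ℝ := fun t => ∫ u in T..t, f u with hI_def
  have hI_deriv : ∀ t, HasDerivAt I (f t) t := fun t =>
    (hfc.integral_hasStrictDerivAt T t).hasDerivAt
  have hI_diff : Differentiable ℝ I := fun t => (hI_deriv t).differentiableAt
  have hI_mono : Monotone I :=
    monotone_of_deriv_nonneg hI_diff fun t => by
      rw [(hI_deriv t).deriv]; exact (hfpos t).le
  have hIT : I T = 0 := intervalIntegral.integral_same
  -- I tends to infinity
  have hI_top : Tendsto I atTop atTop := by
    rcases tendsto_of_monotone hI_mono with h' | ⟨l, hl⟩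
    · exact h'
    exfalso
    apply hKdiv
    have hint : IntegrableOn f (Set.Ioi T) := by
      apply integrableOn_Ioi_of_intervalIntegral_norm_tendsto l T
        (fun b => (hfc.intervalIntegrable T b).1) tendsto_id
      have : (fun b : ℝ => ∫ x in T..b, ‖f x‖) = I := by
        funext b
        refine intervalIntegral.integral_congr fun x _ => ?_
        exact Real.norm_of_nonneg (hfpos x).le
      rw [this]; exact hl
    have h1 : IntegrableOn (fun u => 1 / K u) (Set.Ioi T) := by
      refine hint.congr_fun (fun x _ => ?_) measurableSet_Ioi
      simp [hf_def, one_div]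
    have h2 : IntegrableOn (fun u => 1 / K u) (Set.Icc 0 (max T 0)) :=
      (hKc.continuousOn.inv₀ fun x _ => hKne x).integrableOn_compact isCompact_Icc
        |>.congr_fun (fun x _ => by simp [one_div]) measurableSet_Icc
    refine (h2.union h1).mono_set fun x hx => ?_
    rcases le_or_gt x T with hxT | hxT
    · exact Or.inl ⟨hx, le_max_of_le_left hxT⟩
    · exact Or.inr hxT
  have hI_cont : Continuous I := hI_diff.continuous
  -- Gronwall setup
  set c : ℝ := σ2 * (C + 1) with hc_def
  have hc : 0 < c := by positivity
  set w : ℝ → ℝ := fun u => c * f2 u * Real.exp (2 * α * I u) with hw_def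
  have hwc : Continuous w :=
    ((continuous_const.mul hf2c).mul ((continuous_const.mul hI_cont).rexp))
  have hwpos : ∀ t, 0 < w t := fun t =>
    mul_pos (mul_pos hc (hf2pos t)) (Real.exp_pos _)
  set g : ℝ → ℝ := fun t => ∫ u in T..t, w u with hg_def
  have hg_deriv : ∀ t, HasDerivAt g (w t) t := fun t =>
    (hwc.integral_hasStrictDerivAt T t).hasDerivAt
  set E : ℝ → ℝ := fun t => ε t * Real.exp (2 * α * I t) with hE_def
  have hE_deriv : ∀ t, HasDerivAt E
      (deriv ε t * Real.exp (2 * α * I t)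
        + ε t * (Real.exp (2 * α * I t) * (2 * α * f t))) t := fun t =>
    ((hε t).hasDerivAt).mul (((hI_deriv t).const_mul (2 * α)).exp)
  set D : ℝ → ℝ := fun t => g t - E t with hD_def
  have hD_deriv : ∀ t, HasDerivAt D
      (w t - (deriv ε t * Real.exp (2 * α * I t)
        + ε t * (Real.exp (2 * α * I t) * (2 * α * f t)))) t := fun t =>
    (hg_deriv t).sub (hE_deriv t)
  have hD_mono : MonotoneOn D (Set.Ici T) := by
    apply monotoneOn_of_deriv_nonneg (convex_Ici T)
      (fun t _ => ((hD_deriv t).continuousAt).continuousWithinAt)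
      (fun t _ => ((hD_deriv t).differentiableAt).differentiableWithinAt)
    intro t ht
    rw [interior_Ici] at ht
    rw [(hD_deriv t).deriv]
    have hh := h t ht.le
    have he : (0:ℝ) < Real.exp (2 * α * I t) := Real.exp_pos _
    have hkey : deriv ε t + 2 * α * f t * ε t ≤ c * f2 t := by
      have h1 : 2 * α / K t = 2 * α * f t := by rw [div_eq_mul_inv]
      have h2 : σ2 * (C + 1) / K t ^ 2 = c * f2 t := by
        rw [div_eq_mul_inv, hc_def]
      rw [h1, h2] at hh
      linarith
    have hε0 := hεpos t
    have hwt : w t = c * f2 t * Real.exp (2 * α * I t) := rfl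
    rw [hwt]
    nlinarith [mul_le_mul_of_nonneg_right hkey he.le]
  -- key Gronwall inequality
  have key : ∀ t, T ≤ t → ε t * Real.exp (2 * α * I t) ≤ ε T + g t := by
    intro t ht
    have := hD_mono (Set.mem_Ici.2 le_rfl) ht ht
    have hgT : g T = 0 := intervalIntegral.integral_same
    simp only [hD_def, hE_def, hgT, hIT, mul_zero, Real.exp_zero, mul_one] at this
    linarith
  -- integrability facts for f2
  have hKsq' : IntegrableOn f2 (Set.Ici (0:ℝ)) := by
    refine hKsq.congr_fun (fun x _ => ?_) measurableSet_Ici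
    simp [one_div, hf2_def]
  have hf2int : IntegrableOn f2 (Set.Ioi (0:ℝ)) :=
    hKsq'.mono_set Set.Ioi_subset_Ici_self
  set L : ℝ := ∫ x in Set.Ioi (0:ℝ), f2 x with hL_def
  -- tail bound
  have htail : ∀ S : ℝ, 0 ≤ S → ∀ t : ℝ, S ≤ t →
      (∫ u in S..t, f2 u) ≤ L - ∫ u in (0:ℝ)..S, f2 u := by
    intro S hS t hSt
    have hsplit : (∫ u in S..t, f2 u) = (∫ u in (0:ℝ)..t, f2 u) - ∫ u in (0:ℝ)..S, f2 u :=
      (intervalIntegral.integral_interval_sub_left (hf2c.intervalIntegrable 0 t)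
        (hf2c.intervalIntegrable 0 S)).symm
    have hle : (∫ u in (0:ℝ)..t, f2 u) ≤ L := by
      rw [intervalIntegral.integral_of_le (hS.trans hSt)]
      exact setIntegral_mono_set hf2int
        (Filter.Eventually.of_forall fun x => (hf2pos x).le)
        (HasSubset.Subset.eventuallyLE Set.Ioc_subset_Ioi_self)
    linarith [hsplit, hle]
  have hconv : Tendsto (fun S => ∫ u in (0:ℝ)..S, f2 u) atTop (nhds L) :=
    intervalIntegral_tendsto_integral_Ioi 0 hf2int tendsto_id
  -- final epsilon argument
  rw [Metric.tendsto_atTop]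
  intro δ hδ
  have hδ2c : 0 < δ / (2 * c) := by positivity
  obtain ⟨S₀, hS₀⟩ := (Metric.tendsto_atTop.1 hconv) (δ / (2 * c)) hδ2c
  set S : ℝ := max S₀ (max T 0) with hS_def
  have hST : T ≤ S := le_max_of_le_right (le_max_left _ _)
  have hS0 : (0:ℝ) ≤ S := le_max_of_le_right (le_max_right _ _)
  have hStail : L - (∫ u in (0:ℝ)..S, f2 u) < δ / (2 * c) := by
    have := hS₀ S (le_max_left _ _)
    rw [Real.dist_eq, abs_lt] at this
    linarith [this.1]
  set B : ℝ := ε T + ∫ u in T..S, w u with hB_def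
  have hB0 : 0 ≤ B := by
    have : 0 ≤ ∫ u in T..S, w u :=
      intervalIntegral.integral_nonneg hST fun u _ => (hwpos u).le
    have := hεpos T
    linarith
  have hexp0 : Tendsto (fun t => Real.exp (-(2 * α * I t)) * B) atTop (nhds 0) := by
    have h1 : Tendsto (fun t => 2 * α * I t) atTop atTop :=
      Tendsto.const_mul_atTop (by positivity) hI_top
    have h2 : Tendsto (fun t => Real.exp (-(2 * α * I t))) atTop (nhds 0) :=
      Real.tendsto_exp_atBot.comp (tendsto_neg_atBot_iff.2 h1)
    simpa using h2.mul_const B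
  obtain ⟨N₀, hN₀⟩ := (Metric.tendsto_atTop.1 hexp0) (δ / 2) (by positivity)
  refine ⟨max N₀ S, fun t ht => ?_⟩
  have htN : N₀ ≤ t := le_trans (le_max_left _ _) ht
  have htS : S ≤ t := le_trans (le_max_right _ _) ht
  have htT : T ≤ t := hST.trans htS
  -- estimate ε t
  have hEt : (0:ℝ) < Real.exp (2 * α * I t) := Real.exp_pos _
  have hgsplit : g t = (∫ u in T..S, w u) + ∫ u in S..t, w u := by
    rw [hg_def]
    exact (intervalIntegral.integral_add_adjacent_intervals
      (hwc.intervalIntegrable T S) (hwc.intervalIntegrable S t)).symm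
  have hwbound : (∫ u in S..t, w u) ≤ Real.exp (2 * α * I t) * c * ∫ u in S..t, f2 u := by
    have hmono : (∫ u in S..t, w u) ≤ ∫ u in S..t, (Real.exp (2 * α * I t) * c) * f2 u := by
      apply intervalIntegral.integral_mono_on htS (hwc.intervalIntegrable S t)
        ((continuous_const.mul hf2c).intervalIntegrable S t)
      intro u hu
      have hIu : I u ≤ I t := hI_mono hu.2
      have : Real.exp (2 * α * I u) ≤ Real.exp (2 * α * I t) := by
        apply Real.exp_le_exp.2
        nlinarith
      calc c * f2 u * Real.exp (2 * α * I u)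
          ≤ c * f2 u * Real.exp (2 * α * I t) :=
            mul_le_mul_of_nonneg_left this (by positivity)
        _ = Real.exp (2 * α * I t) * c * f2 u := by ring
    rw [intervalIntegral.integral_const_mul] at hmono
    linarith [hmono]
  have htail2 : (∫ u in S..t, f2 u) < δ / (2 * c) :=
    lt_of_le_of_lt (htail S hS0 t htS) hStail
  have hεbound : ε t ≤ Real.exp (-(2 * α * I t)) * B + c * ∫ u in S..t, f2 u := by
    have h1 : ε t * Real.exp (2 * α * I t) ≤ B + Real.exp (2 * α * I t) * (c * ∫ u in S..t, f2 u) := by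
      have := key t htT
      rw [hgsplit] at this
      have := hwbound
      rw [hB_def]
      linarith [hwbound, key t htT]
    have h2 : ε t ≤ (B + Real.exp (2 * α * I t) * (c * ∫ u in S..t, f2 u)) / Real.exp (2 * α * I t) :=
      (le_div_iff₀ hEt).2 h1
    have h3 : (B + Real.exp (2 * α * I t) * (c * ∫ u in S..t, f2 u)) / Real.exp (2 * α * I t)
        = Real.exp (-(2 * α * I t)) * B + c * ∫ u in S..t, f2 u := by
      rw [Real.exp_neg]
      field_simp
    rw [h3] at h2
    exact h2
  have hexpsmall : Real.exp (-(2 * α * I t)) * B < δ / 2 := by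
    have := hN₀ t htN
    rw [Real.dist_eq, sub_zero] at this
    calc Real.exp (-(2 * α * I t)) * B ≤ |Real.exp (-(2 * α * I t)) * B| := le_abs_self _
      _ < δ / 2 := this
  have hc2 : c * ∫ u in S..t, f2 u < δ / 2 := by
    have := mul_lt_mul_of_pos_left htail2 hc
    have heq : c * (δ / (2 * c)) = δ / 2 := by
      field_simp
    linarith [this, heq.le]
  rw [Real.dist_eq, sub_zero, abs_of_nonneg (hεpos t)]
  calc ε t ≤ Real.exp (-(2 * α * I t)) * B + c * ∫ u in S..t, f2 u := hεbound
    _ < δ / 2 + δ / 2 := add_lt_add hexpsmall hc2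
    _ = δ := by ring
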